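/- Let n, t with 1 ≤ t < n−1, s : Fin n → ℝ nonnegative nonincreasing. Suppose v : Fin n → ℝ is nonnegative, nonincreasing, feasible, and minimizes ∑_i v i among feasible nonincreasing nonnegative vectors. Then for every j ≤ t (1-indexed), if v j > v_{j+1}, the constraint for party j is tight: v j + ∑_{i=t+2}^{n} v i = s j. -/

import Mathlib

private lemma sum_tail_le_sum (V : ℕ → ℝ) (hV : Antitone V) (m : ℕ) (S : Finset ℕ)
    (hS : S ⊆ Finset.range m) :
    ∑ i ∈ Finset.Ico (m - S.card) m, V i ≤ ∑ i ∈ S, V i := by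
  set r := S.card with hr
  have hrm : r ≤ m := by
    have := Finset.card_le_card hS
    simpa using this
  set T := Finset.Ico (m - r) m with hT
  have hTcard : T.card = r := by
    simp only [hT, Nat.card_Ico]
    omega
  have hc : (T \ S).card = (S \ T).card := by
    have h1 := Finset.card_sdiff_add_card_inter T S
    have h2 := Finset.card_sdiff_add_card_inter S T
    rw [Finset.inter_comm] at h2
    omega
  have hub : ∀ x ∈ T \ S, V x ≤ V (m - r) := by
    intro x hx
    have hxT := (Finset.mem_sdiff.mp hx).1
    exact hV (Finset.mem_Ico.mp hxT).1
  have hlb : ∀ x ∈ S \ T, V (m - r) ≤ V x := by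
    intro x hx
    obtain ⟨hxS, hxT⟩ := Finset.mem_sdiff.mp hx
    have hxm : x < m := Finset.mem_range.mp (hS hxS)
    have hxlt : x < m - r := by
      by_contra h
      exact hxT (Finset.mem_Ico.mpr ⟨by omega, hxm⟩)
    exact hV (by omega)
  have h1 : ∑ i ∈ T \ S, V i ≤ (T \ S).card • V (m - r) :=
    Finset.sum_le_card_nsmul _ _ _ hub
  have h2 : (S \ T).card • V (m - r) ≤ ∑ i ∈ S \ T, V i :=
    Finset.card_nsmul_le_sum _ _ _ hlb
  have e1 : ∑ i ∈ T ∩ S, V i + ∑ i ∈ T \ S, V i = ∑ i ∈ T, V i :=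
    Finset.sum_inter_add_sum_sdiff T S V
  have e2 : ∑ i ∈ S ∩ T, V i + ∑ i ∈ S \ T, V i = ∑ i ∈ S, V i :=
    Finset.sum_inter_add_sum_sdiff S T V
  have einter : ∑ i ∈ T ∩ S, V i = ∑ i ∈ S ∩ T, V i := by rw [Finset.inter_comm]
  rw [hc] at h1
  linarith

private lemma keyFin {n : ℕ} (v : Fin n → ℝ) (hv0 : ∀ i, 0 ≤ v i)
    (hvmono : ∀ i j : Fin n, i ≤ j → v j ≤ v i) (B : Finset (Fin n)) (c : ℕ)
    (hc : c + B.card = n) :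
    ∑ i ∈ Finset.univ.filter (fun i : Fin n => c ≤ i.val), v i ≤ ∑ i ∈ B, v i := by
  classical
  set V : ℕ → ℝ := fun i => if h : i < n then v ⟨i, h⟩ else 0 with hVdef
  have hV : Antitone V := by
    intro a b hab
    by_cases hb : b < n
    · have ha : a < n := lt_of_le_of_lt hab hb
      simp only [hVdef, dif_pos hb, dif_pos ha]
      exact hvmono ⟨a, ha⟩ ⟨b, hb⟩ hab
    · simp only [hVdef, dif_neg hb]
      by_cases ha : a < n
      · simp only [dif_pos ha]; exact hv0 _
      · simp [dif_neg ha]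
  have himg : ∀ (C : Finset (Fin n)), ∑ i ∈ C, v i = ∑ i ∈ C.image Fin.val, V i := by
    intro C
    rw [Finset.sum_image (fun a _ b _ h => Fin.val_injective h)]
    apply Finset.sum_congr rfl
    intro x _
    simp [hVdef, x.isLt]
  have himgtail : (Finset.univ.filter (fun i : Fin n => c ≤ i.val)).image Fin.val
      = Finset.Ico c n := by
    ext a
    simp only [Finset.mem_image, Finset.mem_filter, Finset.mem_univ, true_and, Finset.mem_Ico]
    constructor
    · rintro ⟨x, hx, rfl⟩; exact ⟨hx, x.isLt⟩
    · rintro ⟨h1, h2⟩; exact ⟨⟨a, h2⟩, h1, rfl⟩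
  rw [himg B, himg _, himgtail]
  have hsub : B.image Fin.val ⊆ Finset.range n := by
    intro a ha
    simp only [Finset.mem_image] at ha
    obtain ⟨x, _, rfl⟩ := ha
    exact Finset.mem_range.mpr x.isLt
  have hcard : (B.image Fin.val).card = B.card :=
    Finset.card_image_of_injective _ Fin.val_injective
  have hkey := sum_tail_le_sum V hV n (B.image Fin.val) hsub
  rw [hcard] at hkey
  have hceq : n - B.card = c := by omega
  rw [hceq] at hkey
  exact hkey

theorem stmt3 (n t : ℕ) (ht : 1 ≤ t) (htn : t + 1 < n)
    (s : Fin n → ℝ) (hs0 : ∀ i, 0 ≤ s i)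
    (hsmono : ∀ i j : Fin n, i ≤ j → s j ≤ s i)
    (v : Fin n → ℝ) (hv0 : ∀ i, 0 ≤ v i)
    (hvmono : ∀ i j : Fin n, i ≤ j → v j ≤ v i)
    (hfeas : ∀ (j : Fin n) (A : Finset (Fin n)), A.card = t → j ∉ A →
      s j ≤ ∑ i ∈ Aᶜ, v i)
    (hopt : ∀ w : Fin n → ℝ, (∀ i, 0 ≤ w i) →
      (∀ i j : Fin n, i ≤ j → w j ≤ w i) →
      (∀ (j : Fin n) (A : Finset (Fin n)), A.card = t → j ∉ A →
        s j ≤ ∑ i ∈ Aᶜ, w i) →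
      ∑ i, v i ≤ ∑ i, w i) :
    ∀ j k : Fin n, j.val + 1 ≤ t → k.val = j.val + 1 → v k < v j →
      v j + ∑ i ∈ Finset.univ.filter (fun i : Fin n => t + 1 ≤ i.val), v i = s j := by
  classical
  intro j k hjt hk hvk
  set tail := ∑ i ∈ Finset.univ.filter (fun i : Fin n => t + 1 ≤ i.val), v i with htail
  have htlt : t < n := by omega
  have ht1lt : t + 1 < n := htn
  set it : Fin n := ⟨t, htlt⟩ with hit
  set it1 : Fin n := ⟨t + 1, ht1lt⟩ with hit1
  -- card of head filters
  have hcardlt : ∀ c : ℕ, c ≤ n →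
      (Finset.univ.filter (fun i : Fin n => i.val < c)).card = c := by
    intro c hcn
    have himg : (Finset.univ.filter (fun i : Fin n => i.val < c)).image Fin.val
        = Finset.range c := by
      ext a
      simp only [Finset.mem_image, Finset.mem_filter, Finset.mem_univ, true_and,
        Finset.mem_range]
      constructor
      · rintro ⟨x, hx, rfl⟩; exact hx
      · intro h; exact ⟨⟨a, by omega⟩, h, rfl⟩
    have := Finset.card_image_of_injective
      (Finset.univ.filter (fun i : Fin n => i.val < c)) Fin.val_injective
    rw [himg, Finset.card_range] at this
    omega
  -- F1 : for m with m.val ≤ t, s m ≤ v m + tail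
  have hF1 : ∀ m : Fin n, m.val < t + 1 → s m ≤ v m + tail := by
    intro m hm
    set A := (Finset.univ.filter (fun i : Fin n => i.val < t + 1)).erase m with hA
    have hmem : m ∈ Finset.univ.filter (fun i : Fin n => i.val < t + 1) := by
      simp [hm]; omega
    have hAcard : A.card = t := by
      rw [hA, Finset.card_erase_of_mem hmem, hcardlt (t + 1) (by omega)]
      omega
    have hmA : m ∉ A := Finset.notMem_erase m _
    have hcompl : Aᶜ = insert m (Finset.univ.filter (fun i : Fin n => t + 1 ≤ i.val)) := by
      ext x
      simp only [hA, Finset.mem_compl, Finset.mem_erase, Finset.mem_filter, Finset.mem_univ,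
        true_and, Finset.mem_insert, not_and, not_lt, Fin.ext_iff]
      omega
    have hmnot : m ∉ Finset.univ.filter (fun i : Fin n => t + 1 ≤ i.val) := by
      simp; omega
    have := hfeas m A hAcard hmA
    rwa [hcompl, Finset.sum_insert hmnot] at this
  -- F2 : for m with t ≤ m.val, s m ≤ v it + tail
  have hF2 : ∀ m : Fin n, t ≤ m.val → s m ≤ v it + tail := by
    intro m hm
    set A := Finset.univ.filter (fun i : Fin n => i.val < t) with hA
    have hAcard : A.card = t := hcardlt t (by omega)
    have hmA : m ∉ A := by simp [hA]; omega
    have hcompl : Aᶜ = insert it (Finset.univ.filter (fun i : Fin n => t + 1 ≤ i.val)) := by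
      ext x
      simp only [hA, Finset.mem_compl, Finset.mem_filter, Finset.mem_univ, true_and,
        Finset.mem_insert, not_lt, Fin.ext_iff, hit]
      omega
    have hnot : it ∉ Finset.univ.filter (fun i : Fin n => t + 1 ≤ i.val) := by
      simp [hit]
    have := hfeas m A hAcard hmA
    rwa [hcompl, Finset.sum_insert hnot] at this
  -- tail = v it1 + tail2
  set tail2 := ∑ i ∈ Finset.univ.filter (fun i : Fin n => t + 2 ≤ i.val), v i with htail2
  have htaileq : tail = v it1 + tail2 := by
    have hset : Finset.univ.filter (fun i : Fin n => t + 1 ≤ i.val)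
        = insert it1 (Finset.univ.filter (fun i : Fin n => t + 2 ≤ i.val)) := by
      ext x
      simp only [Finset.mem_filter, Finset.mem_univ, true_and, Finset.mem_insert,
        Fin.ext_iff, hit1]
      omega
    have hnot : it1 ∉ Finset.univ.filter (fun i : Fin n => t + 2 ≤ i.val) := by
      simp [hit1]
    rw [htail, hset, Finset.sum_insert hnot]
  -- step 1 : s j ≤ v j + tail
  have hstep1 : s j ≤ v j + tail := hF1 j (by omega)
  -- step 2 : v j + tail ≤ s j, by contradiction
  by_contra hne
  have hstep2 : s j < v j + tail := lt_of_le_of_ne hstep1 (fun h => hne h.symm)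
  set ε := min (v j + tail - s j) (v j - v k) with hε
  have hεpos : 0 < ε := lt_min (by linarith) (by linarith)
  have hε1 : ε ≤ v j + tail - s j := min_le_left _ _
  have hε2 : ε ≤ v j - v k := min_le_right _ _
  set w : Fin n → ℝ := fun i => if i = j then v j - ε else v i with hw
  have hw0 : ∀ i, 0 ≤ w i := by
    intro i
    rw [hw]
    by_cases h : i = j
    · simp only [if_pos h]
      have := hv0 k
      linarith
    · simp only [if_neg h]; exact hv0 i
  have hkj : j < k := by
    rw [Fin.lt_def]; omega
  have hwmono : ∀ i i' : Fin n, i ≤ i' → w i' ≤ w i := by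
    intro i i' hii
    rw [hw]
    by_cases h1 : i = j <;> by_cases h2 : i' = j
    · simp [h1, h2]
    · simp only [if_pos h1, if_neg h2]
      have hlt : j < i' := lt_of_le_of_ne (h1 ▸ hii) (fun h => h2 h.symm)
      have hki' : k ≤ i' := by
        rw [Fin.le_def]
        rw [Fin.lt_def] at hlt
        omega
      have := hvmono k i' hki'
      linarith
    · simp only [if_neg h1, if_pos h2]
      have := hvmono i j (h2 ▸ hii)
      linarith
    · simp only [if_neg h1, if_neg h2]
      exact hvmono i i' hii
  -- sum of w over a set containing j
  have hwsum : ∀ C : Finset (Fin n), j ∈ C → ∑ i ∈ C, w i = ∑ i ∈ C, v i - ε := by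
    intro C hjC
    rw [← Finset.add_sum_erase C w hjC, ← Finset.add_sum_erase C v hjC]
    have : ∑ i ∈ C.erase j, w i = ∑ i ∈ C.erase j, v i := by
      apply Finset.sum_congr rfl
      intro x hx
      rw [hw]
      simp only [if_neg (Finset.ne_of_mem_erase hx)]
    rw [this, hw]
    simp only [if_pos rfl]
    simp
    ring
  -- feasibility of w
  have hwfeas : ∀ (m : Fin n) (A : Finset (Fin n)), A.card = t → m ∉ A →
      s m ≤ ∑ i ∈ Aᶜ, w i := by
    intro m A hAcard hmA
    by_cases hjA : j ∈ A
    · -- w agrees with v on Aᶜ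
      have : ∑ i ∈ Aᶜ, w i = ∑ i ∈ Aᶜ, v i := by
        apply Finset.sum_congr rfl
        intro x hx
        rw [hw]
        have : x ≠ j := by
          intro h; subst h
          exact (Finset.mem_compl.mp hx) hjA
        simp [this]
      rw [this]
      exact hfeas m A hAcard hmA
    · have hjC : j ∈ Aᶜ := Finset.mem_compl.mpr hjA
      have hmC : m ∈ Aᶜ := Finset.mem_compl.mpr hmA
      rw [hwsum Aᶜ hjC]
      have hCcard : (Aᶜ).card = n - t := by
        rw [Finset.card_compl, hAcard, Fintype.card_fin]
      have hdecomp1 : ∑ i ∈ Aᶜ, v i = v j + ∑ i ∈ Aᶜ.erase j, v i :=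
        (Finset.add_sum_erase _ v hjC).symm
      by_cases hmt : t ≤ m.val
      · -- use tail bound on Aᶜ.erase j
        have hcard1 : (Aᶜ.erase j).card = n - t - 1 := by
          rw [Finset.card_erase_of_mem hjC, hCcard]
        have hkey := keyFin v hv0 hvmono (Aᶜ.erase j) (t + 1) (by omega)
        have hvkt : v it ≤ v k := hvmono k it (by rw [Fin.le_def]; simp [hit]; omega)
        have := hF2 m hmt
        rw [← htail] at hkey
        linarith
      · -- m.val < t, so m ≠ j or m = j; handle m = j separately
        push_neg at hmt
        by_cases hmj : m = j
        · subst hmj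
          have hcard1 : (Aᶜ.erase m).card = n - t - 1 := by
            rw [Finset.card_erase_of_mem hjC, hCcard]
          have hkey := keyFin v hv0 hvmono (Aᶜ.erase m) (t + 1) (by omega)
          rw [← htail] at hkey
          linarith
        · have hmC' : m ∈ Aᶜ.erase j := Finset.mem_erase.mpr ⟨hmj, hmC⟩
          have hdecomp2 : ∑ i ∈ Aᶜ.erase j, v i = v m + ∑ i ∈ (Aᶜ.erase j).erase m, v i :=
            (Finset.add_sum_erase _ v hmC').symm
          have hcard2 : ((Aᶜ.erase j).erase m).card = n - t - 2 := by
            rw [Finset.card_erase_of_mem hmC', Finset.card_erase_of_mem hjC, hCcard]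
            omega
          have hkey := keyFin v hv0 hvmono ((Aᶜ.erase j).erase m) (t + 2) (by omega)
          rw [← htail2] at hkey
          have hvk1 : v it1 ≤ v k := hvmono k it1 (by rw [Fin.le_def]; simp [hit1]; omega)
          have := hF1 m (by omega)
          rw [htaileq] at this
          linarith
  -- optimality contradiction
  have hsum := hopt w hw0 hwmono hwfeas
  have : ∑ i, w i = ∑ i, v i - ε := hwsum Finset.univ (Finset.mem_univ j)
  linarith
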